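/- Let X be an infinite-dimensional Banach space admitting an inevitable biorthogonal system {A_j}, {A_j*} with constant 0 < δ < 1/2, and let ε > 0. Then |||x||| := ε‖x‖ + sup{|⟨x*, x⟩| : x* ∈ A_1*} defines an equivalent norm on X (indeed ε‖x‖ ≤ |||x||| ≤ (1 + ε)‖x‖ for all x), and for every infinite-dimensional closed subspace Y of X one has sup{|||x|||/|||y||| : x, y ∈ Y, ‖x‖ = ‖y‖ = 1} ≥ (1 + ε − δ)/(ε + δ). In particular the norm of X is λ-distortable with λ = (1 + ε − δ)/(ε + δ). -/

import Mathlib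

noncomputable section

/-- A subset `A` of (the unit sphere of) `X` is inevitable: every
infinite-dimensional closed subspace of `X` comes arbitrarily close to `A`. -/
def Inevitable {X : Type*} [NormedAddCommGroup X] [NormedSpace ℂ X] (A : Set X) : Prop :=
  ∀ H : Submodule ℂ X, IsClosed (H : Set X) → ¬ FiniteDimensional ℂ H →
    ∀ ε : ℝ, 0 < ε → ∃ h ∈ H, ∃ a ∈ A, ‖h - a‖ < ε

/-- `N : X → ℝ` is a norm on the complex normed space `X`. -/
def IsNormOn {X : Type*} [NormedAddCommGroup X] [NormedSpace ℂ X] (N : X → ℝ) : Prop :=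
  (∀ x, 0 ≤ N x) ∧ (∀ x, N x = 0 → x = 0) ∧
  (∀ (c : ℂ) (x : X), N (c • x) = ‖c‖ * N x) ∧
  (∀ x y, N (x + y) ≤ N x + N y)

/-- The norm of `X` is `lam`-distortable: there is an equivalent norm `N` such
that on the unit sphere of every infinite-dimensional closed subspace `Y`,
`sup N x / N y ≥ lam`. -/
def Distortable (X : Type*) [NormedAddCommGroup X] [NormedSpace ℂ X] (lam : ℝ) : Prop :=
  ∃ N : X → ℝ, IsNormOn N ∧
    (∃ c > (0 : ℝ), ∃ C > (0 : ℝ), ∀ x, c * ‖x‖ ≤ N x ∧ N x ≤ C * ‖x‖) ∧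
    ∀ Y : Submodule ℂ X, IsClosed (Y : Set X) → ¬ FiniteDimensional ℂ Y →
      lam ≤ sSup {r : ℝ | ∃ x ∈ Y, ∃ y ∈ Y, ‖x‖ = 1 ∧ ‖y‖ = 1 ∧ r = N x / N y}

/-- The renorming `|||x||| = ε‖x‖ + sup { |⟨f, x⟩| : f ∈ B1 }`. -/
def triNorm {X : Type*} [NormedAddCommGroup X] [NormedSpace ℂ X]
    (B1 : Set (X →L[ℂ] ℂ)) (ε : ℝ) (x : X) : ℝ :=
  ε * ‖x‖ + sSup ((fun f : X →L[ℂ] ℂ => ‖f x‖) '' B1)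
open Pointwise in
private lemma mul_sSup_image (a : ℝ) (ha : 0 ≤ a) (s : Set ℝ) :
    sSup ((fun x => a * x) '' s) = a * sSup s := by
  rw [show (fun x => a * x) '' s = a • s by simp [← Set.image_smul, smul_eq_mul],
    Real.sSup_smul_of_nonneg ha, smul_eq_mul]

private lemma normalize_close {X : Type*} [NormedAddCommGroup X] [NormedSpace ℂ X]
    (Y : Submodule ℂ X) (h a : X) (hh : h ∈ Y) (ha : ‖a‖ = 1) (γ : ℝ)
    (hγ1 : γ < 1) (hcl : ‖h - a‖ < γ) : ∃ x ∈ Y, ‖x‖ = 1 ∧ ‖x - a‖ < 2 * γ := by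
  have habs : |‖h‖ - 1| ≤ ‖h - a‖ := by
    simpa [ha] using abs_norm_sub_norm_le h a
  obtain ⟨hl, hr⟩ := abs_lt.mp (lt_of_le_of_lt habs hcl)
  have hpos : 0 < ‖h‖ := by linarith
  refine ⟨((‖h‖ : ℂ))⁻¹ • h, Y.smul_mem _ hh, ?_, ?_⟩
  · simp [norm_smul, Real.norm_eq_abs, abs_of_pos hpos, inv_mul_cancel₀ hpos.ne']
  · have hd : ((‖h‖ : ℂ))⁻¹ • h - h = (((‖h‖⁻¹ - 1 : ℝ)) : ℂ) • h := by
      push_cast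
      rw [sub_smul, one_smul]
    have he : (‖h‖⁻¹ - 1) * ‖h‖ = 1 - ‖h‖ := by field_simp
    have hn : ‖((‖h‖ : ℂ))⁻¹ • h - h‖ = |1 - ‖h‖| := by
      rw [hd, norm_smul]
      calc ‖(((‖h‖⁻¹ - 1 : ℝ)) : ℂ)‖ * ‖h‖ = |‖h‖⁻¹ - 1| * ‖h‖ := by
            rw [Complex.norm_real, Real.norm_eq_abs]
      _ = |(‖h‖⁻¹ - 1) * ‖h‖| := by rw [abs_mul, abs_of_pos hpos]
      _ = |1 - ‖h‖| := by rw [he]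
    have tri : ‖((‖h‖ : ℂ))⁻¹ • h - a‖ ≤ ‖((‖h‖ : ℂ))⁻¹ • h - h‖ + ‖h - a‖ := by
      simpa using norm_sub_le_norm_sub_add_norm_sub (((‖h‖ : ℂ))⁻¹ • h) h a
    have : |1 - ‖h‖| ≤ ‖h - a‖ := by rwa [abs_sub_comm]
    calc ‖((‖h‖ : ℂ))⁻¹ • h - a‖ ≤ |1 - ‖h‖| + ‖h - a‖ := by rw [← hn]; exact tri
    _ < 2 * γ := by nlinarith [lt_of_le_of_lt this hcl]
theorem renorming_is_distortion
    (X : Type*) [NormedAddCommGroup X] [NormedSpace ℂ X] [CompleteSpace X]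
    (hX : ¬ FiniteDimensional ℂ X)
    (δ : ℝ) (hδ0 : 0 < δ) (hδ : δ < 1 / 2)
    (A : ℕ → Set X) (B : ℕ → Set (X →L[ℂ] ℂ))
    (hA : ∀ j, A j ⊆ Metric.sphere (0 : X) 1)
    (hB : ∀ j, B j ⊆ Metric.closedBall (0 : X →L[ℂ] ℂ) 1)
    (hinev : ∀ j, Inevitable (A j))
    (hbio1 : ∀ j, ∀ x ∈ A j, ∃ f ∈ B j, 1 - δ ≤ (f x).re)
    (hbio2 : ∀ j k, j ≠ k → ∀ x ∈ A j, ∀ f ∈ B k, ‖f x‖ ≤ δ)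
    (ε : ℝ) (hε : 0 < ε) :
    IsNormOn (triNorm (B 1) ε) ∧
    (∀ x : X, ε * ‖x‖ ≤ triNorm (B 1) ε x ∧ triNorm (B 1) ε x ≤ (1 + ε) * ‖x‖) ∧
    (∀ Y : Submodule ℂ X, IsClosed (Y : Set X) → ¬ FiniteDimensional ℂ Y →
      (1 + ε - δ) / (ε + δ) ≤ sSup {r : ℝ | ∃ x ∈ Y, ∃ y ∈ Y, ‖x‖ = 1 ∧ ‖y‖ = 1 ∧
        r = triNorm (B 1) ε x / triNorm (B 1) ε y}) ∧
    Distortable X ((1 + ε - δ) / (ε + δ)) := by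
  set N := triNorm (B 1) ε with hNdef
  set S : X → Set ℝ := fun x => (fun f : X →L[ℂ] ℂ => ‖f x‖) '' B 1 with hSdef
  -- the top submodule is infinite dimensional
  have topND : ¬ FiniteDimensional ℂ (⊤ : Submodule ℂ X) := fun h =>
    hX (Submodule.topEquiv : (⊤ : Submodule ℂ X) ≃ₗ[ℂ] X).finiteDimensional
  -- B 1 is nonempty
  have hB1ne : (B 1).Nonempty := by
    obtain ⟨h, -, a, haA, -⟩ := hinev 1 ⊤ isClosed_univ topND 1 one_pos
    obtain ⟨f, hf, -⟩ := hbio1 1 a haA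
    exact ⟨f, hf⟩
  obtain ⟨f₀, hf₀⟩ := hB1ne
  have Sne : ∀ x : X, (S x).Nonempty := fun x => ⟨_, ⟨f₀, hf₀, rfl⟩⟩
  have hub : ∀ x : X, ∀ r ∈ S x, r ≤ ‖x‖ := by
    rintro x r ⟨f, hf, rfl⟩
    have hf1 : ‖f‖ ≤ 1 := by simpa using mem_closedBall_zero_iff.mp (hB 1 hf)
    calc ‖f x‖ = ‖f x‖ := rfl
    _ ≤ ‖f‖ * ‖x‖ := f.le_opNorm x
    _ ≤ 1 * ‖x‖ := by gcongr
    _ = ‖x‖ := one_mul _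
  have Sbdd : ∀ x : X, BddAbove (S x) := fun x => ⟨‖x‖, fun r hr => hub x r hr⟩
  have sup_nonneg : ∀ x : X, 0 ≤ sSup (S x) := by
    intro x
    refine Real.sSup_nonneg ?_
    rintro r ⟨f, -, rfl⟩
    positivity
  have sup_le_norm : ∀ x : X, sSup (S x) ≤ ‖x‖ := fun x => Real.sSup_le (hub x) (norm_nonneg x)
  have hNx : ∀ x : X, N x = ε * ‖x‖ + sSup (S x) := fun _ => rfl
  -- equivalence bounds
  have hbounds : ∀ x : X, ε * ‖x‖ ≤ N x ∧ N x ≤ (1 + ε) * ‖x‖ := by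
    intro x
    constructor
    · rw [hNx]; nlinarith [sup_nonneg x]
    · rw [hNx]; nlinarith [sup_le_norm x]
  -- triangle inequality
  have htri : ∀ x y : X, N (x + y) ≤ N x + N y := by
    intro x y
    have h1 : sSup (S (x + y)) ≤ sSup (S x) + sSup (S y) := by
      refine Real.sSup_le ?_ (add_nonneg (sup_nonneg x) (sup_nonneg y))
      rintro r ⟨f, hf, rfl⟩
      calc ‖f (x + y)‖ ≤ ‖f x‖ + ‖f y‖ := by
            rw [map_add]; exact norm_add_le _ _
      _ ≤ sSup (S x) + sSup (S y) :=
          add_le_add (le_csSup (Sbdd x) ⟨f, hf, rfl⟩) (le_csSup (Sbdd y) ⟨f, hf, rfl⟩)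
    have h2 : ‖x + y‖ ≤ ‖x‖ + ‖y‖ := norm_add_le x y
    rw [hNx, hNx, hNx]; nlinarith
  -- homogeneity
  have hhom : ∀ (c : ℂ) (x : X), N (c • x) = ‖c‖ * N x := by
    intro c x
    have h1 : S (c • x) = (fun t => ‖c‖ * t) '' S x := by
      rw [hSdef, ← Set.image_comp]
      funext f
      simp [map_smul, smul_eq_mul, map_mul]
    have h2 : sSup (S (c • x)) = ‖c‖ * sSup (S x) := by
      rw [h1, mul_sSup_image _ (norm_nonneg c)]
    rw [hNx, hNx, h2, norm_smul]
    ring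
  -- it is a norm
  have hnorm : IsNormOn N := by
    refine ⟨fun x => le_trans (mul_nonneg hε.le (norm_nonneg x)) (hbounds x).1, fun x hx => ?_, hhom, htri⟩
    have := (hbounds x).1
    rw [hx] at this
    have : ‖x‖ ≤ 0 := by nlinarith
    exact norm_le_zero_iff.mp this
  -- Lipschitz-type estimate
  have hlip : ∀ u v : X, N u ≤ N v + (1 + ε) * ‖u - v‖ := by
    intro u v
    calc N u = N (v + (u - v)) := by rw [show v + (u - v) = u by abel]
    _ ≤ N v + N (u - v) := htri v (u - v)
    _ ≤ N v + (1 + ε) * ‖u - v‖ := by linarith [(hbounds (u - v)).2]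
  -- key estimates on A 1 and A 2
  have hNa : ∀ a ∈ A 1, 1 + ε - δ ≤ N a := by
    intro a ha
    obtain ⟨f, hf, hfa⟩ := hbio1 1 a ha
    have h1 : (1 : ℝ) - δ ≤ sSup (S a) :=
      le_trans (le_trans hfa (Complex.re_le_norm _)) (le_csSup (Sbdd a) ⟨f, hf, rfl⟩)
    have h2 : ‖a‖ = 1 := by simpa using mem_sphere_zero_iff_norm.mp (hA 1 ha)
    rw [hNx, h2]; linarith
  have hNb : ∀ b ∈ A 2, N b ≤ ε + δ := by
    intro b hb
    have h1 : sSup (S b) ≤ δ := by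
      refine Real.sSup_le ?_ hδ0.le
      rintro r ⟨f, hf, rfl⟩
      exact hbio2 2 1 (by norm_num) b hb f hf
    have h2 : ‖b‖ = 1 := by simpa using mem_sphere_zero_iff_norm.mp (hA 2 hb)
    rw [hNx, h2]; linarith
  -- main subspace estimate
  have key : ∀ Y : Submodule ℂ X, IsClosed (Y : Set X) → ¬ FiniteDimensional ℂ Y →
      (1 + ε - δ) / (ε + δ) ≤ sSup {r : ℝ | ∃ x ∈ Y, ∃ y ∈ Y, ‖x‖ = 1 ∧ ‖y‖ = 1 ∧
        r = N x / N y} := by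
    intro Y hYc hYfd
    set T : Set ℝ := {r : ℝ | ∃ x ∈ Y, ∃ y ∈ Y, ‖x‖ = 1 ∧ ‖y‖ = 1 ∧ r = N x / N y} with hT
    have Tbdd : BddAbove T := by
      refine ⟨(1 + ε) / ε, ?_⟩
      rintro r ⟨x, -, y, -, hx1, hy1, rfl⟩
      have h1 : N x ≤ 1 + ε := by have := (hbounds x).2; rw [hx1] at this; linarith
      have h2 : ε ≤ N y := by have := (hbounds y).1; rw [hy1] at this; linarith
      exact div_le_div₀ (by positivity) h1 hε h2
    -- for each small γ, a ratio element close to the target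
    have ratio : ∀ γ : ℝ, 0 < γ → γ < 1 →
        (1 + ε - δ - 2 * (1 + ε) * γ) / (ε + δ + 2 * (1 + ε) * γ) ≤ sSup T := by
      intro γ hγ hγ1
      obtain ⟨hx, hxY, a, haA, hxa⟩ := hinev 1 Y hYc hYfd γ hγ
      obtain ⟨hy, hyY, b, hbA, hyb⟩ := hinev 2 Y hYc hYfd γ hγ
      have ha1 : ‖a‖ = 1 := by simpa using mem_sphere_zero_iff_norm.mp (hA 1 haA)
      have hb1 : ‖b‖ = 1 := by simpa using mem_sphere_zero_iff_norm.mp (hA 2 hbA)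
      obtain ⟨x, hxY', hx1, hxa'⟩ := normalize_close Y hx a hxY ha1 γ hγ1 hxa
      obtain ⟨y, hyY', hy1, hyb'⟩ := normalize_close Y hy b hyY hb1 γ hγ1 hyb
      have hNxl : 1 + ε - δ - 2 * (1 + ε) * γ ≤ N x := by
        have l1 := hlip a x
        have l2 : ‖a - x‖ < 2 * γ := by rwa [norm_sub_rev]
        have := hNa a haA
        nlinarith
      have hNyl : N y ≤ ε + δ + 2 * (1 + ε) * γ := by
        have l1 := hlip y b
        have := hNb b hbA
        nlinarith
      have hNy0 : ε ≤ N y := by have := (hbounds y).1; rw [hy1] at this; linarith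
      have hmem : N x / N y ∈ T := ⟨x, hxY', y, hyY', hx1, hy1, rfl⟩
      calc (1 + ε - δ - 2 * (1 + ε) * γ) / (ε + δ + 2 * (1 + ε) * γ) ≤ N x / N y := by
            apply div_le_div₀ ((hnorm.1 x)) hNxl (lt_of_lt_of_le hε hNy0) hNyl
      _ ≤ sSup T := le_csSup Tbdd hmem
    -- take the limit γ → 0⁺
    have cont : ContinuousAt
        (fun γ : ℝ => (1 + ε - δ - 2 * (1 + ε) * γ) / (ε + δ + 2 * (1 + ε) * γ)) 0 := by
      apply ContinuousAt.div (by fun_prop) (by fun_prop)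
      simp only [mul_zero, add_zero]
      exact ne_of_gt (by linarith)
    have tend : Filter.Tendsto
        (fun γ : ℝ => (1 + ε - δ - 2 * (1 + ε) * γ) / (ε + δ + 2 * (1 + ε) * γ))
        (nhdsWithin 0 (Set.Ioi 0)) (nhds ((1 + ε - δ) / (ε + δ))) := by
      have h := cont.tendsto
      simp only [mul_zero, add_zero, sub_zero] at h
      exact h.mono_left nhdsWithin_le_nhds
    refine le_of_tendsto tend ?_
    filter_upwards [Ioo_mem_nhdsGT_of_mem (show (0:ℝ) ∈ Set.Ico (0:ℝ) 1 by norm_num)]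
      with γ hγ
    exact ratio γ hγ.1 hγ.2
  exact ⟨hnorm, hbounds, key, N, hnorm, ⟨ε, hε, 1 + ε, by linarith, hbounds⟩, key⟩
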